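/- Let E be a real inner product space, f : E → ℝ a convex differentiable function, and x* a minimizer of f. Fix σ ∈ [0,1), γ ∈ (0,1), η > 0, A ≥ 0, and points x, z ∈ E. Set a = (η + √(η² + 4ηA))/2 and y = (A/(A+a))·x + (a/(A+a))·z. Suppose x̂ ∈ E satisfies ‖x̂ − y + γη·∇f(x̂)‖ ≤ σ‖x̂ − y‖. Define x⁺ = ((1−γ)A/(A+γa))·x + (γ(A+a)/(A+γa))·x̂, z⁺ = z − γa·∇f(x̂), and A⁺ = A + γa. Then A⁺(f(x⁺) − f(x*)) + (1/2)‖z⁺ − x*‖² ≤ A(f(x) − f(x*)) + (1/2)‖z − x*‖² − ((1−σ²)a²/(2η²))‖x̂ − y‖². -/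

import Mathlib

open scoped RealInnerProductSpace

open Filter Set Topology

lemma grad_ineq {E : Type*} [NormedAddCommGroup E] [InnerProductSpace ℝ E]
    (f : E → ℝ) (gf : E → E)
    (hdiff : ∀ p : E, HasFDerivAt f (innerSL ℝ (gf p)) p)
    (hconv : ConvexOn ℝ Set.univ f) (p u : E) :
    f p + ⟪gf p, u - p⟫ ≤ f u := by
  set φ : ℝ → ℝ := fun t => f (p + t • (u - p)) with hφ
  have hline : HasDerivAt φ ⟪gf p, u - p⟫ 0 := by
    have h1 : HasDerivAt (fun t : ℝ => p + t • (u - p)) (u - p) 0 := by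
      simpa using ((hasDerivAt_id (0:ℝ)).smul_const (u - p)).const_add p
    have h2 := (hdiff (p + (0:ℝ) • (u - p))).comp_hasDerivAt 0 h1
    simpa [hφ, Function.comp_def] using h2
  have hslope : Tendsto (slope φ 0) (𝓝[>] 0) (𝓝 ⟪gf p, u - p⟫) :=
    (hasDerivAt_iff_tendsto_slope.mp hline).mono_left
      (nhdsWithin_mono 0 (fun t ht => ne_of_gt ht))
  have hub : ∀ᶠ t in 𝓝[>] (0:ℝ), slope φ 0 t ≤ f u - f p := by
    filter_upwards [Ioc_mem_nhdsGT (zero_lt_one' ℝ)] with t ht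
    have hc := hconv.2 (Set.mem_univ p) (Set.mem_univ u)
      (by linarith [ht.2] : (0:ℝ) ≤ 1 - t) ht.1.le (by ring)
    have heq : (1 - t) • p + t • u = p + t • (u - p) := by module
    rw [heq] at hc
    have h0 : φ 0 = f p := by simp [hφ]
    rw [slope_def_field, h0, sub_zero, div_le_iff₀ ht.1]
    have hφt : φ t = f (p + t • (u - p)) := rfl
    rw [← hφt, smul_eq_mul, smul_eq_mul] at hc
    nlinarith [hc]
  have := le_of_tendsto hslope hub
  linarith

set_option maxHeartbeats 1000000 in
/-- One-step potential decrease of the Monteiro–Svaiter acceleration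
framework in the backtracking case, with momentum damping factor `γ = η̂/η < 1`. -/
theorem stmt1
    {E : Type*} [NormedAddCommGroup E] [InnerProductSpace ℝ E]
    (f : E → ℝ) (gf : E → E)
    (hdiff : ∀ p : E, HasFDerivAt f (innerSL ℝ (gf p)) p)
    (hconv : ConvexOn ℝ Set.univ f)
    (xstar : E) (hmin : ∀ w : E, f xstar ≤ f w)
    (σ γ η A : ℝ) (hσ0 : 0 ≤ σ) (hσ1 : σ < 1) (hγ0 : 0 < γ) (hγ1 : γ < 1)
    (hη : 0 < η) (hA : 0 ≤ A)
    (x z : E)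
    (a : ℝ) (ha : a = (η + Real.sqrt (η ^ 2 + 4 * η * A)) / 2)
    (y : E) (hy : y = (A / (A + a)) • x + (a / (A + a)) • z)
    (xhat : E)
    (hxhat : ‖xhat - y + (γ * η) • gf xhat‖ ≤ σ * ‖xhat - y‖)
    (xplus zplus : E) (Aplus : ℝ)
    (hxplus : xplus = ((1 - γ) * A / (A + γ * a)) • x + (γ * (A + a) / (A + γ * a)) • xhat)
    (hzplus : zplus = z - (γ * a) • gf xhat)
    (hAplus : Aplus = A + γ * a) :
    Aplus * (f xplus - f xstar) + (1 / 2) * ‖zplus - xstar‖ ^ 2 ≤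
      A * (f x - f xstar) + (1 / 2) * ‖z - xstar‖ ^ 2
        - ((1 - σ ^ 2) * a ^ 2 / (2 * η ^ 2)) * ‖xhat - y‖ ^ 2 := by
  set g := gf xhat with hg
  -- basic positivity facts
  have hs := Real.sqrt_nonneg (η ^ 2 + 4 * η * A)
  have hapos : 0 < a := by rw [ha]; linarith
  have ha2 : a ^ 2 = η * (A + a) := by
    have hs2 := Real.sq_sqrt (show (0:ℝ) ≤ η ^ 2 + 4 * η * A by positivity)
    rw [ha]; linear_combination hs2 / 4
  have hAa : 0 < A + a := by linarith
  have hγa : 0 < γ * a := mul_pos hγ0 hapos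
  have hAγ : 0 < A + γ * a := by linarith
  -- abbreviations for inner products and norms
  set i1 := ⟪g, x - xhat⟫ with hi1
  set i2 := ⟪g, xstar - xhat⟫ with hi2
  set i3 := ⟪g, z - xstar⟫ with hi3
  set i4 := ⟪g, xhat - y⟫ with hi4
  set G := ‖g‖ ^ 2 with hG
  set U := ‖xhat - y‖ ^ 2 with hU
  -- convexity: gradient inequalities
  have h1 : f xhat + i1 ≤ f x := grad_ineq f gf hdiff hconv xhat x
  have h2 : f xhat + i2 ≤ f xstar := grad_ineq f gf hdiff hconv xhat xstar
  -- convex combination bound for xplus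
  have hcomb : f xplus ≤ ((1 - γ) * A / (A + γ * a)) * f x
      + (γ * (A + a) / (A + γ * a)) * f xhat := by
    have hsum : (1 - γ) * A / (A + γ * a) + γ * (A + a) / (A + γ * a) = 1 := by
      field_simp; ring
    have := hconv.2 (Set.mem_univ x) (Set.mem_univ xhat)
      (div_nonneg (mul_nonneg (by linarith) hA) hAγ.le)
      (div_nonneg (mul_nonneg hγ0.le hAa.le) hAγ.le) hsum
    simpa [smul_eq_mul, ← hxplus] using this
  have key1 : (A + γ * a) * f xplus ≤ (1 - γ) * A * f x + γ * (A + a) * f xhat := by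
    have h := mul_le_mul_of_nonneg_left hcomb hAγ.le
    calc (A + γ * a) * f xplus
        ≤ (A + γ * a) * (((1 - γ) * A / (A + γ * a)) * f x
            + (γ * (A + a) / (A + γ * a)) * f xhat) := h
      _ = (1 - γ) * A * f x + γ * (A + a) * f xhat := by field_simp
  have key2 : γ * A * (f xhat + i1) ≤ γ * A * f x :=
    mul_le_mul_of_nonneg_left h1 (by positivity)
  have key3 : γ * a * (f xhat + i2) ≤ γ * a * f xstar :=
    mul_le_mul_of_nonneg_left h2 hγa.le
  -- norm expansion for zplus
  have hzv : zplus - xstar = (z - xstar) - (γ * a) • g := by rw [hzplus]; abel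
  have hzexp : ‖zplus - xstar‖ ^ 2 = ‖z - xstar‖ ^ 2 - 2 * (γ * a) * i3 + (γ * a) ^ 2 * G := by
    rw [hzv, norm_sub_sq_real, real_inner_smul_right, norm_smul]
    rw [real_inner_comm]
    simp [hi3, hG, mul_pow, abs_mul, sq_abs]
    ring
  -- linear identity from the definition of y
  have hvec : A • (x - xhat) + (a • (xstar - xhat) + a • (z - xstar))
      = -((A + a) • (xhat - y)) := by
    rw [hy]
    match_scalars <;> (field_simp; try ring)
  have hlin : A * i1 + (a * i2 + a * i3) = -((A + a) * i4) := by
    have := congrArg (fun w => ⟪g, w⟫) hvec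
    simpa [inner_add_right, real_inner_smul_right, inner_neg_right, hi1, hi2, hi3, hi4]
      using this
  have hlin' : γ * A * i1 + γ * a * i2 + γ * a * i3 = -(γ * A * i4) - γ * a * i4 := by
    linear_combination γ * hlin
  -- the contraction condition, squared and expanded
  have hstar : U + 2 * (γ * η) * i4 + (γ * η) ^ 2 * G ≤ σ ^ 2 * U := by
    have hsq : ‖xhat - y + (γ * η) • g‖ ^ 2 ≤ (σ * ‖xhat - y‖) ^ 2 :=
      pow_le_pow_left₀ (norm_nonneg _) hxhat 2
    rw [norm_add_sq_real, real_inner_smul_right, norm_smul] at hsq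
    rw [real_inner_comm] at hsq
    calc U + 2 * (γ * η) * i4 + (γ * η) ^ 2 * G
        = ‖xhat - y‖ ^ 2 + 2 * (γ * η * ⟪g, xhat - y⟫) + (‖γ * η‖ * ‖g‖) ^ 2 := by
          simp [hU, hi4, hG, mul_pow, norm_mul, Real.norm_eq_abs, sq_abs]; ring
      _ ≤ (σ * ‖xhat - y‖) ^ 2 := hsq
      _ = σ ^ 2 * U := by rw [hU]; ring
  -- key inequality 4
  have key4 : γ * A * i4 + γ * a * i4 + γ ^ 2 * a ^ 2 / 2 * G
      ≤ -((1 - σ ^ 2) * a ^ 2 / (2 * η ^ 2)) * U := by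
    have h := mul_le_mul_of_nonneg_left hstar (sq_nonneg a)
    have h2' : γ * A * i4 + γ * a * i4 + γ ^ 2 * a ^ 2 / 2 * G
        = (1 / (2 * η ^ 2)) * (a ^ 2 * (2 * (γ * η) * i4 + (γ * η) ^ 2 * G)) := by
      have hη' : η ≠ 0 := hη.ne'
      rw [ha2]; field_simp
    have h3' : -((1 - σ ^ 2) * a ^ 2 / (2 * η ^ 2)) * U
        = (1 / (2 * η ^ 2)) * (a ^ 2 * (σ ^ 2 * U) - a ^ 2 * U) := by
      field_simp; ring
    rw [h2', h3']
    apply mul_le_mul_of_nonneg_left _ (by positivity)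
    nlinarith [h]
  -- combine everything
  rw [hAplus]
  linarith [key1, key2, key3, key4, hlin', hzexp]
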